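/- Let k be a field and C a k-linear additive category. Let S be a subset of the objects of C such that every object of C is isomorphic to a finite direct sum of copies of objects in S. Then the inclusion of the full subcategory C|_S on the objects S into C induces an isomorphism of k-vector spaces Tr(C|_S) ≅ Tr(C). -/

import Mathlib

open CategoryTheory CategoryTheory.Limits

universe v u v' u'

variable (k : Type*) [Field k]

/-- The submodule of commutator relations defining the trace of a `k`-linear category. -/
noncomputable def traceRel (C : Type u) [Category.{v} C] [Preadditive C]
    [CategoryTheory.Linear k C] : Submodule k (DirectSum C fun x : C => x ⟶ x) :=
  letI := Classical.decEq C
  Submodule.span k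
    {z | ∃ (x y : C) (f : x ⟶ y) (g : y ⟶ x),
      z = DirectSum.of (fun w : C => w ⟶ w) x (f ≫ g)
        - DirectSum.of (fun w : C => w ⟶ w) y (g ≫ f)}

/-- The trace (zeroth Hochschild–Mitchell homology) of a `k`-linear category:
`(⊕ₓ End x) / span{fg - gf}`. -/
noncomputable abbrev Trace (C : Type u) [Category.{v} C] [Preadditive C]
    [CategoryTheory.Linear k C] : Type _ :=
  (DirectSum C fun x : C => x ⟶ x) ⧸ traceRel k C

/-- The class `[f]` of an endomorphism `f : x ⟶ x` in the trace. -/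
noncomputable def traceMk {C : Type u} [Category.{v} C] [Preadditive C]
    [CategoryTheory.Linear k C] {x : C} (f : x ⟶ x) : Trace k C :=
  letI := Classical.decEq C
  Submodule.Quotient.mk (DirectSum.of (fun w : C => w ⟶ w) x f)

/-- The `k`-linear map `Tr(F) : Tr(C) → Tr(D)` induced by a `k`-linear functor `F : C ⥤ D`,
sending `[f]` to `[F.map f]`. -/
noncomputable def traceMap {C : Type u} [Category.{v} C] [Preadditive C]
    [CategoryTheory.Linear k C] {D : Type u'} [Category.{v'} D] [Preadditive D]
    [CategoryTheory.Linear k D] (F : C ⥤ D) [F.Additive] [F.Linear k] :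
    Trace k C →ₗ[k] Trace k D :=
  letI := Classical.decEq C
  letI := Classical.decEq D
  Submodule.liftQ (traceRel k C)
    (DirectSum.toModule k C (Trace k D)
      (fun x => (traceRel k D).mkQ ∘ₗ
        (DirectSum.lof k D (fun w : D => w ⟶ w) (F.obj x)) ∘ₗ (F.mapLinearMap k)))
    (by
      rw [traceRel, Submodule.span_le]
      rintro z ⟨x, y, f, g, rfl⟩
      simp only [SetLike.mem_coe, LinearMap.mem_ker, map_sub]
      rw [← DirectSum.lof_eq_of k, ← DirectSum.lof_eq_of k,
        DirectSum.toModule_lof, DirectSum.toModule_lof]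
      simp only [LinearMap.comp_apply, Functor.coe_mapLinearMap]
      rw [sub_eq_zero]
      simp only [Submodule.mkQ_apply]
      rw [Submodule.Quotient.eq, traceRel]
      refine Submodule.subset_span ⟨F.obj x, F.obj y, F.map f, F.map g, ?_⟩
      rw [DirectSum.lof_eq_of k, DirectSum.lof_eq_of k, F.map_comp, F.map_comp])

section AuxTrace

variable {C : Type u} [Category.{v} C] [Preadditive C] [CategoryTheory.Linear k C]

/-- `traceMk` as a linear map. -/
noncomputable def traceMkHom (x : C) : (x ⟶ x) →ₗ[k] Trace k C :=
  letI := Classical.decEq C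
  (traceRel k C).mkQ ∘ₗ DirectSum.lof k C (fun w : C => w ⟶ w) x

lemma traceMkHom_apply {x : C} (f : x ⟶ x) : traceMkHom k x f = traceMk k f := rfl

lemma traceMk_comm {x y : C} (f : x ⟶ y) (g : y ⟶ x) :
    traceMk k (f ≫ g) = traceMk k (g ≫ f) := by
  letI := Classical.decEq C
  refine (Submodule.Quotient.eq _).mpr ?_
  exact Submodule.subset_span ⟨x, y, f, g, rfl⟩

lemma traceMk_sum {x : C} {ι : Type*} (s : Finset ι) (h : ι → (x ⟶ x)) :
    traceMk k (∑ j ∈ s, h j) = ∑ j ∈ s, traceMk k (h j) := by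
  simp only [← traceMkHom_apply, map_sum]

lemma traceMap_traceMk {D : Type u'} [Category.{v'} D] [Preadditive D]
    [CategoryTheory.Linear k D] (F : C ⥤ D) [F.Additive] [F.Linear k] {x : C} (f : x ⟶ x) :
    traceMap k F (traceMk k f) = traceMk k (F.map f) := by
  letI := Classical.decEq C
  letI := Classical.decEq D
  show Submodule.liftQ (traceRel k C) _ _ (Submodule.Quotient.mk
    (DirectSum.of (fun w : C => w ⟶ w) x f)) = _
  rw [Submodule.liftQ_apply, ← DirectSum.lof_eq_of k, DirectSum.toModule_lof]
  rfl

/-- A morphism of `C` between objects of `S`, seen as a morphism of the full subcategory. -/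
def toSubHom (S : Set C) {a b : C} (ha : a ∈ S) (hb : b ∈ S) (f : a ⟶ b) :
    (⟨a, ha⟩ : ObjectProperty.FullSubcategory (· ∈ S)) ⟶ ⟨b, hb⟩ := ObjectProperty.homMk f

lemma toSubHom_comp (S : Set C) {a b c : C} (ha : a ∈ S) (hb : b ∈ S) (hc : c ∈ S)
    (f : a ⟶ b) (g : b ⟶ c) :
    toSubHom S ha hc (f ≫ g) = toSubHom S ha hb f ≫ toSubHom S hb hc g := rfl

/-- `f ↦ [f]` for endomorphisms of an object of `S`, as a linear map to `Tr(C|_S)`. -/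
noncomputable def traceMkSubHom (S : Set C) {a : C} (ha : a ∈ S) :
    (a ⟶ a) →ₗ[k] Trace k (ObjectProperty.FullSubcategory (· ∈ S)) where
  toFun f := traceMk k (toSubHom S ha ha f)
  map_add' f g := by
    show traceMk k (toSubHom S ha ha f + toSubHom S ha ha g) = _
    rw [← traceMkHom_apply, map_add, traceMkHom_apply, traceMkHom_apply]
  map_smul' c f := by
    show traceMk k (c • toSubHom S ha ha f) = _
    rw [← traceMkHom_apply, map_smul, traceMkHom_apply]
    rfl

lemma traceMkSubHom_apply (S : Set C) {a : C} (ha : a ∈ S) (f : a ⟶ a) :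
    traceMkSubHom k S ha f = traceMk k (toSubHom S ha ha f) := rfl

variable [HasFiniteBiproducts C]

lemma decomp_comp {a b : C} {n : ℕ} (fobj : Fin n → C) (e : b ≅ ⨁ fobj)
    (u : a ⟶ b) (v : b ⟶ a) :
    u ≫ v = ∑ j, (u ≫ e.hom ≫ biproduct.π fobj j) ≫ (biproduct.ι fobj j ≫ e.inv ≫ v) := by
  have h : u ≫ v
      = u ≫ e.hom ≫ (∑ j, biproduct.π fobj j ≫ biproduct.ι fobj j) ≫ e.inv ≫ v := by
    rw [biproduct.total]
    simp
  rw [h]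
  simp only [Preadditive.comp_sum, Preadditive.sum_comp, Category.assoc]

/-- The component at `x` of the inverse to `Tr(inclusion)`. -/
noncomputable def traceComp (S : Set C) (x : C) {n : ℕ} (fobj : Fin n → C)
    (hmem : ∀ i, fobj i ∈ S) (e : x ≅ ⨁ fobj) :
    (x ⟶ x) →ₗ[k] Trace k (ObjectProperty.FullSubcategory (· ∈ S)) :=
  ∑ i : Fin n,
    (traceMkSubHom k S (hmem i)) ∘ₗ
      (CategoryTheory.Linear.rightComp k (fobj i) (e.hom ≫ biproduct.π fobj i)) ∘ₗ
      (CategoryTheory.Linear.leftComp k x (biproduct.ι fobj i ≫ e.inv))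

lemma traceComp_apply (S : Set C) (x : C) {n : ℕ} (fobj : Fin n → C)
    (hmem : ∀ i, fobj i ∈ S) (e : x ≅ ⨁ fobj) (h : x ⟶ x) :
    traceComp k S x fobj hmem e h =
      ∑ i, traceMk k (toSubHom S (hmem i) (hmem i)
        ((biproduct.ι fobj i ≫ e.inv) ≫ h ≫ (e.hom ≫ biproduct.π fobj i))) := by
  simp only [traceComp, LinearMap.sum_apply, LinearMap.comp_apply,
    CategoryTheory.Linear.leftComp_apply, CategoryTheory.Linear.rightComp_apply,
    traceMkSubHom_apply, Category.assoc]

end AuxTrace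

section AuxBiprod

variable {C : Type u} [Category.{v} C] [Preadditive C] [CategoryTheory.Linear k C]
  [HasFiniteBiproducts C]

lemma traceComp_comm (S : Set C) {x y : C} {nx ny : ℕ} (fx : Fin nx → C) (fy : Fin ny → C)
    (hx : ∀ i, fx i ∈ S) (hy : ∀ j, fy j ∈ S) (ex : x ≅ ⨁ fx) (ey : y ≅ ⨁ fy)
    (f : x ⟶ y) (g : y ⟶ x) :
    traceComp k S x fx hx ex (f ≫ g) = traceComp k S y fy hy ey (g ≫ f) := by
  rw [traceComp_apply, traceComp_apply]
  have hA : ∀ i, (biproduct.ι fx i ≫ ex.inv) ≫ (f ≫ g) ≫ (ex.hom ≫ biproduct.π fx i)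
      = ∑ j, ((biproduct.ι fx i ≫ ex.inv) ≫ f ≫ (ey.hom ≫ biproduct.π fy j)) ≫
          ((biproduct.ι fy j ≫ ey.inv) ≫ g ≫ (ex.hom ≫ biproduct.π fx i)) := by
    intro i
    calc (biproduct.ι fx i ≫ ex.inv) ≫ (f ≫ g) ≫ (ex.hom ≫ biproduct.π fx i)
        = ((biproduct.ι fx i ≫ ex.inv) ≫ f) ≫ (g ≫ (ex.hom ≫ biproduct.π fx i)) := by
          simp only [Category.assoc]
      _ = _ := by
          rw [decomp_comp fy ey]
          simp only [Category.assoc]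
  have hB : ∀ j, (biproduct.ι fy j ≫ ey.inv) ≫ (g ≫ f) ≫ (ey.hom ≫ biproduct.π fy j)
      = ∑ i, ((biproduct.ι fy j ≫ ey.inv) ≫ g ≫ (ex.hom ≫ biproduct.π fx i)) ≫
          ((biproduct.ι fx i ≫ ex.inv) ≫ f ≫ (ey.hom ≫ biproduct.π fy j)) := by
    intro j
    calc (biproduct.ι fy j ≫ ey.inv) ≫ (g ≫ f) ≫ (ey.hom ≫ biproduct.π fy j)
        = ((biproduct.ι fy j ≫ ey.inv) ≫ g) ≫ (f ≫ (ey.hom ≫ biproduct.π fy j)) := by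
          simp only [Category.assoc]
      _ = _ := by
          rw [decomp_comp fx ex]
          simp only [Category.assoc]
  calc (∑ i, traceMk k (toSubHom S (hx i) (hx i)
        ((biproduct.ι fx i ≫ ex.inv) ≫ (f ≫ g) ≫ (ex.hom ≫ biproduct.π fx i))))
      = ∑ i, ∑ j, traceMk k
          (toSubHom S (hx i) (hy j) ((biproduct.ι fx i ≫ ex.inv) ≫ f ≫ (ey.hom ≫ biproduct.π fy j)) ≫
           toSubHom S (hy j) (hx i) ((biproduct.ι fy j ≫ ey.inv) ≫ g ≫ (ex.hom ≫ biproduct.π fx i))) := by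
        refine Finset.sum_congr rfl fun i _ => ?_
        rw [hA i]
        exact map_sum (traceMkSubHom k S (hx i)) _ _
    _ = ∑ i, ∑ j, traceMk k
          (toSubHom S (hy j) (hx i) ((biproduct.ι fy j ≫ ey.inv) ≫ g ≫ (ex.hom ≫ biproduct.π fx i)) ≫
           toSubHom S (hx i) (hy j) ((biproduct.ι fx i ≫ ex.inv) ≫ f ≫ (ey.hom ≫ biproduct.π fy j))) := by
        exact Finset.sum_congr rfl fun i _ => Finset.sum_congr rfl fun j _ => traceMk_comm k _ _
    _ = ∑ j, ∑ i, traceMk k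
          (toSubHom S (hy j) (hx i) ((biproduct.ι fy j ≫ ey.inv) ≫ g ≫ (ex.hom ≫ biproduct.π fx i)) ≫
           toSubHom S (hx i) (hy j) ((biproduct.ι fx i ≫ ex.inv) ≫ f ≫ (ey.hom ≫ biproduct.π fy j))) :=
        Finset.sum_comm
    _ = ∑ j, traceMk k (toSubHom S (hy j) (hy j)
          ((biproduct.ι fy j ≫ ey.inv) ≫ (g ≫ f) ≫ (ey.hom ≫ biproduct.π fy j))) := by
        refine Finset.sum_congr rfl fun j _ => ?_
        rw [hB j]
        exact (map_sum (traceMkSubHom k S (hy j)) _ _).symm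

/-- The inverse map `Tr(C) → Tr(C|_S)` determined by chosen decompositions. -/
noncomputable def traceInv (S : Set C) (n : C → ℕ) (fobj : ∀ x, Fin (n x) → C)
    (hmem : ∀ x i, fobj x i ∈ S) (e : ∀ x, x ≅ ⨁ fobj x) :
    Trace k C →ₗ[k] Trace k (ObjectProperty.FullSubcategory (· ∈ S)) :=
  letI := Classical.decEq C
  Submodule.liftQ (traceRel k C)
    (DirectSum.toModule k C _ fun x => traceComp k S x (fobj x) (hmem x) (e x))
    (by
      rw [traceRel, Submodule.span_le]
      rintro z ⟨x, y, f, g, rfl⟩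
      simp only [SetLike.mem_coe, LinearMap.mem_ker, map_sub]
      rw [← DirectSum.lof_eq_of k, ← DirectSum.lof_eq_of k,
        DirectSum.toModule_lof, DirectSum.toModule_lof, sub_eq_zero]
      exact traceComp_comm k S _ _ _ _ _ _ f g)

lemma traceInv_traceMk (S : Set C) (n : C → ℕ) (fobj : ∀ x, Fin (n x) → C)
    (hmem : ∀ x i, fobj x i ∈ S) (e : ∀ x, x ≅ ⨁ fobj x) {x : C} (h : x ⟶ x) :
    traceInv k S n fobj hmem e (traceMk k h)
      = traceComp k S x (fobj x) (hmem x) (e x) h := by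
  letI := Classical.decEq C
  show Submodule.liftQ (traceRel k C) _ _ (Submodule.Quotient.mk
    (DirectSum.of (fun w : C => w ⟶ w) x h)) = _
  rw [Submodule.liftQ_apply, ← DirectSum.lof_eq_of k, DirectSum.toModule_lof]

lemma sum_conj_eq {a : C} {n : ℕ} (fobj : Fin n → C) (e : a ≅ ⨁ fobj) (h : a ⟶ a) :
    (∑ i, (h ≫ (e.hom ≫ biproduct.π fobj i)) ≫ (biproduct.ι fobj i ≫ e.inv)) = h := by
  have h2 := decomp_comp fobj e h (𝟙 a)
  rw [Category.comp_id] at h2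
  simp only [Category.assoc, Category.comp_id] at h2 ⊢
  exact h2.symm

lemma traceComp_self (S : Set C) {a : C} (ha : a ∈ S) {n : ℕ} (fobj : Fin n → C)
    (hmem : ∀ i, fobj i ∈ S) (e : a ≅ ⨁ fobj) (h : a ⟶ a) :
    traceComp k S a fobj hmem e h = traceMk k (toSubHom S ha ha h) := by
  rw [traceComp_apply]
  calc (∑ i, traceMk k (toSubHom S (hmem i) (hmem i)
        ((biproduct.ι fobj i ≫ e.inv) ≫ h ≫ (e.hom ≫ biproduct.π fobj i))))
      = ∑ i, traceMk k (toSubHom S ha ha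
          ((h ≫ (e.hom ≫ biproduct.π fobj i)) ≫ (biproduct.ι fobj i ≫ e.inv))) := by
        refine Finset.sum_congr rfl fun i _ => ?_
        exact traceMk_comm k (toSubHom S (hmem i) ha (biproduct.ι fobj i ≫ e.inv))
          (toSubHom S ha (hmem i) (h ≫ (e.hom ≫ biproduct.π fobj i)))
    _ = traceMkSubHom k S ha
          (∑ i, (h ≫ (e.hom ≫ biproduct.π fobj i)) ≫ (biproduct.ι fobj i ≫ e.inv)) :=
        (map_sum (traceMkSubHom k S ha) _ _).symm
    _ = traceMk k (toSubHom S ha ha h) := by rw [sum_conj_eq]; rfl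

lemma traceMk_conj_sum {a : C} {n : ℕ} (fobj : Fin n → C) (e : a ≅ ⨁ fobj) (h : a ⟶ a) :
    (∑ i, traceMk k ((biproduct.ι fobj i ≫ e.inv) ≫ h ≫ (e.hom ≫ biproduct.π fobj i)))
      = traceMk k h := by
  calc (∑ i, traceMk k ((biproduct.ι fobj i ≫ e.inv) ≫ h ≫ (e.hom ≫ biproduct.π fobj i)))
      = ∑ i, traceMk k
          ((h ≫ (e.hom ≫ biproduct.π fobj i)) ≫ (biproduct.ι fobj i ≫ e.inv)) := by
        refine Finset.sum_congr rfl fun i _ => ?_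
        exact traceMk_comm k (biproduct.ι fobj i ≫ e.inv) (h ≫ (e.hom ≫ biproduct.π fobj i))
    _ = traceMkHom k a (∑ i, (h ≫ (e.hom ≫ biproduct.π fobj i)) ≫ (biproduct.ι fobj i ≫ e.inv)) :=
        (map_sum (traceMkHom k a) _ _).symm
    _ = traceMk k h := by rw [sum_conj_eq]; rfl

end AuxBiprod


/-- If every object of a `k`-linear additive category `C` is isomorphic to a
finite direct sum of copies of objects in `S ⊆ Ob C`, then the inclusion of the full
subcategory `C|_S` into `C` induces an isomorphism `Tr(C|_S) ≅ Tr(C)`. -/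
theorem trace_fullSubcategoryInclusion_bijective
    (C : Type u) [Category.{v} C] [Preadditive C] [CategoryTheory.Linear k C]
    [HasFiniteBiproducts C] (S : Set C)
    (hS : ∀ x : C, ∃ (n : ℕ) (f : Fin n → C), (∀ i, f i ∈ S) ∧ Nonempty (x ≅ ⨁ f)) :
    Function.Bijective (traceMap k (ObjectProperty.ι (· ∈ S))) := by
  classical
  choose n fobj hmem hne using hS
  let e : ∀ x : C, x ≅ ⨁ fobj x := fun x => (hne x).some
  let T := traceInv k S n fobj hmem e
  have left : T ∘ₗ traceMap k (ObjectProperty.ι (· ∈ S)) = LinearMap.id := by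
    apply Submodule.linearMap_qext
    apply DirectSum.linearMap_ext
    intro s
    apply LinearMap.ext
    intro h
    show T (traceMap k (ObjectProperty.ι (· ∈ S)) (traceMk k h)) = traceMk k h
    rw [traceMap_traceMk]
    show traceInv k S n fobj hmem e
      (traceMk k ((ObjectProperty.ι (· ∈ S)).map h)) = traceMk k h
    rw [traceInv_traceMk]
    exact traceComp_self k S s.property (fobj s.obj) (hmem s.obj) (e s.obj)
      ((ObjectProperty.ι (· ∈ S)).map h)
  have right : traceMap k (ObjectProperty.ι (· ∈ S)) ∘ₗ T = LinearMap.id := by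
    apply Submodule.linearMap_qext
    apply DirectSum.linearMap_ext
    intro x
    apply LinearMap.ext
    intro h
    show traceMap k (ObjectProperty.ι (· ∈ S)) (T (traceMk k h)) = traceMk k h
    have hT : T (traceMk k h) = traceComp k S x (fobj x) (hmem x) (e x) h :=
      traceInv_traceMk k S n fobj hmem e h
    rw [hT, traceComp_apply, map_sum]
    calc (∑ i, traceMap k (ObjectProperty.ι (· ∈ S))
          (traceMk k (toSubHom S (hmem x i) (hmem x i)
            ((biproduct.ι (fobj x) i ≫ (e x).inv) ≫ h ≫ ((e x).hom ≫ biproduct.π (fobj x) i)))))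
        = ∑ i, traceMk k
            ((biproduct.ι (fobj x) i ≫ (e x).inv) ≫ h ≫ ((e x).hom ≫ biproduct.π (fobj x) i)) := by
          refine Finset.sum_congr rfl fun i _ => ?_
          exact traceMap_traceMk k (ObjectProperty.ι (· ∈ S)) _
      _ = traceMk k h := traceMk_conj_sum k (fobj x) (e x) h
  exact Function.bijective_iff_has_inverse.mpr
    ⟨T, fun z => DFunLike.congr_fun left z, fun z => DFunLike.congr_fun right z⟩
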